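/- Suppose μ is even (μ(−y) = μ(y) for all y) and strictly decreasing on (0, ∞) (the flat highlighting case, where the highlighting propensity of items decreases with distance from the truth). Then for every η ≥ 0, MIS is differentiable at η with MIS′(η) < 0; i.e., increasing the weight on highlighting strictly decreases misinformation (Proposition 1, flat case). -/

import Mathlib

open MeasureTheory Real

/-- Density of the normal distribution `N(0, σ²)`. -/
noncomputable def gauss (σ y : ℝ) : ℝ :=
  (Real.sqrt (2 * Real.pi * σ ^ 2))⁻¹ * Real.exp (-(y ^ 2) / (2 * σ ^ 2))

/-- Mean highlighting propensity `μ̄ = ∫ μ(y)·g(y) dy`. -/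
noncomputable def mubar (σ : ℝ) (μ : ℝ → ℝ) : ℝ :=
  ∫ y : ℝ, μ y * gauss σ y

/-- Denominator `D(η,y) = M·(1 + η·μ̄) + η·(μ(y) − μ̄)`. -/
noncomputable def Dfun (σ : ℝ) (μ : ℝ → ℝ) (M η y : ℝ) : ℝ :=
  M * (1 + η * mubar σ μ) + η * (μ y - mubar σ μ)

/-- Expected popularity `π(η,y) = (1 + η·μ(y))/D(η,y)`. -/
noncomputable def popEx (σ : ℝ) (μ : ℝ → ℝ) (M η y : ℝ) : ℝ :=
  (1 + η * μ y) / Dfun σ μ M η y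

/-- The affine clicking response
`Λ(z) = (M + log β·(M − ζ₀ + ζ₁·z))/(M + log β·M·(M − 1)/2)`. -/
noncomputable def Lam (M β ζ₀ ζ₁ z : ℝ) : ℝ :=
  (M + Real.log β * (M - ζ₀ + ζ₁ * z)) / (M + Real.log β * M * (M - 1) / 2)

/-- The slope of `Λ`: `s = ζ₁·log β/(M + log β·M·(M − 1)/2)`. -/
noncomputable def slopeLam (M β ζ₁ : ℝ) : ℝ :=
  ζ₁ * Real.log β / (M + Real.log β * M * (M - 1) / 2)

/-- Misinformation `MIS(η) = ∫ |y|·Λ(π(η,y))·g(y) dy` (true state `θ = 0`). -/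
noncomputable def MIS (σ : ℝ) (μ : ℝ → ℝ) (M β ζ₀ ζ₁ η : ℝ) : ℝ :=
  ∫ y : ℝ, |y| * Lam M β ζ₀ ζ₁ (popEx σ μ M η y) * gauss σ y


lemma gauss_eq (σ : ℝ) :
    gauss σ = ProbabilityTheory.gaussianPDFReal 0 (⟨σ ^ 2, sq_nonneg σ⟩ : NNReal) := by
  funext y
  simp [gauss, ProbabilityTheory.gaussianPDFReal, NNReal.coe_mk]
  rfl

lemma gauss_pos {σ : ℝ} (hσ : 0 < σ) (y : ℝ) : 0 < gauss σ y := by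
  have : (0:ℝ) < 2 * Real.pi * σ ^ 2 := by positivity
  unfold gauss; positivity

lemma gauss_meas (σ : ℝ) : Measurable (gauss σ) := by
  rw [gauss_eq]; exact ProbabilityTheory.measurable_gaussianPDFReal _ _

lemma integrable_gauss {σ : ℝ} (hσ : 0 < σ) : Integrable (gauss σ) := by
  rw [gauss_eq]; exact ProbabilityTheory.integrable_gaussianPDFReal _ _

lemma integral_gauss {σ : ℝ} (hσ : 0 < σ) : ∫ y : ℝ, gauss σ y = 1 := by
  rw [gauss_eq]
  exact ProbabilityTheory.integral_gaussianPDFReal_eq_one 0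
    (fun h => (pow_pos hσ 2).ne' (NNReal.coe_eq_zero.2 h))

lemma integrable_abs_mul_gauss {σ : ℝ} (hσ : 0 < σ) :
    Integrable (fun y : ℝ => |y| * gauss σ y) := by
  have hb : (0:ℝ) < 1 / (2 * σ ^ 2) := by positivity
  have h1 : Integrable (fun y : ℝ => y * Real.exp (-(1 / (2 * σ ^ 2)) * y ^ 2)) :=
    integrable_mul_exp_neg_mul_sq hb
  have h2 := h1.abs
  have h3 : Integrable (fun y : ℝ => |y| * Real.exp (-(y ^ 2) / (2 * σ ^ 2))) := by
    refine h2.congr (Filter.Eventually.of_forall fun y => ?_)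
    simp only [abs_mul, abs_of_pos (Real.exp_pos _)]
    congr 1
    ring_nf
  have := h3.const_mul ((Real.sqrt (2 * Real.pi * σ ^ 2))⁻¹)
  refine this.congr (Filter.Eventually.of_forall fun y => ?_)
  simp only [gauss]; ring

lemma integrable_mu_mul_gauss {σ : ℝ} (hσ : 0 < σ) {μ : ℝ → ℝ} (hμmeas : Measurable μ)
    (hμ : ∀ y, μ y ∈ Set.Icc (0:ℝ) 1) :
    Integrable (fun y : ℝ => μ y * gauss σ y) := by
  refine (integrable_gauss hσ).mono' ((hμmeas.mul (gauss_meas σ)).aestronglyMeasurable) ?_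
  refine Filter.Eventually.of_forall fun y => ?_
  rw [Real.norm_eq_abs, abs_mul, abs_of_nonneg (hμ y).1, abs_of_pos (gauss_pos hσ y)]
  exact mul_le_of_le_one_left (gauss_pos hσ y).le (hμ y).2

lemma mubar_mem {σ : ℝ} (hσ : 0 < σ) {μ : ℝ → ℝ} (hμmeas : Measurable μ)
    (hμ : ∀ y, μ y ∈ Set.Icc (0:ℝ) 1) : mubar σ μ ∈ Set.Icc (0:ℝ) 1 := by
  constructor
  · exact integral_nonneg fun y => mul_nonneg (hμ y).1 (gauss_pos hσ y).le
  · calc mubar σ μ ≤ ∫ y : ℝ, gauss σ y := by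
          refine integral_mono (integrable_mu_mul_gauss hσ hμmeas hμ) (integrable_gauss hσ)
            fun y => ?_
          exact mul_le_of_le_one_left (gauss_pos hσ y).le (hμ y).2
      _ = 1 := integral_gauss hσ

lemma integral_lt_of_ae_le_of_lt_on {f g : ℝ → ℝ} (hf : Integrable f) (hg : Integrable g)
    (hle : ∀ᵐ y, f y ≤ g y) {S : Set ℝ} (hS : 0 < volume S) (hlt : ∀ y ∈ S, f y < g y) :
    ∫ y, f y < ∫ y, g y := by
  have h0 : 0 < ∫ y, (g y - f y) := by
    rw [integral_pos_iff_support_of_nonneg_ae (hle.mono fun y hy => sub_nonneg.2 hy)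
      (hg.sub hf)]
    refine lt_of_lt_of_le hS (measure_mono fun y hy => ?_)
    exact sub_ne_zero.2 (hlt y hy).ne'
  have := integral_sub hg hf
  rw [this] at h0
  linarith

lemma ae_ne_zero_common : ∀ᵐ y : ℝ, y ∉ ({0} : Set ℝ) :=
  (Set.countable_singleton 0).ae_notMem volume

lemma exists_threshold {σ : ℝ} (hσ : 0 < σ) {μ : ℝ → ℝ} (hμmeas : Measurable μ)
    (hμ : ∀ y, μ y ∈ Set.Icc (0:ℝ) 1) (heven : ∀ y, μ (-y) = μ y)
    (hanti : StrictAntiOn μ (Set.Ioi (0:ℝ))) :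
    ∃ T : ℝ, 0 < T ∧ (∀ y, 0 < y → y < T → mubar σ μ < μ y) ∧
      (∀ y, T < y → μ y < mubar σ μ) := by
  set m := mubar σ μ with hm_def
  have hint1 : Integrable (fun y : ℝ => μ y * gauss σ y) :=
    integrable_mu_mul_gauss hσ hμmeas hμ
  have hint2 : Integrable (fun y : ℝ => m * gauss σ y) := (integrable_gauss hσ).const_mul m
  have hintm : ∫ y : ℝ, m * gauss σ y = m := by
    rw [integral_const_mul, integral_gauss hσ, mul_one]
  -- evenness transfer
  have hev : ∀ y : ℝ, y ≠ 0 → μ y = μ |y| := by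
    intro y hy
    rcases abs_cases y with ⟨h1, _⟩ | ⟨h1, _⟩
    · rw [h1]
    · rw [h1, heven]
  -- Step A : ∃ a > 0, m < μ a
  have hA : ∃ a, 0 < a ∧ m < μ a := by
    by_contra hcon
    push_neg at hcon
    have hlt : ∫ y : ℝ, μ y * gauss σ y < ∫ y : ℝ, m * gauss σ y := by
      refine integral_lt_of_ae_le_of_lt_on hint1 hint2 ?_ (S := Set.Ioi 1) ?_ ?_
      · refine ae_ne_zero_common.mono fun y hy => ?_
        have hy0 : y ≠ 0 := by simpa using hy
        have : μ y ≤ m := by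
          rw [hev y hy0]; exact hcon |y| (abs_pos.2 hy0)
        exact mul_le_mul_of_nonneg_right this (gauss_pos hσ y).le
      · rw [Real.volume_Ioi]; exact ENNReal.zero_lt_top
      · intro y hy
        have hy1 : (1:ℝ) < y := hy
        have : μ y < m :=
          lt_of_lt_of_le (hanti (Set.mem_Ioi.2 one_pos) (Set.mem_Ioi.2 (by linarith)) hy1)
            (hcon 1 one_pos)
        exact mul_lt_mul_of_pos_right this (gauss_pos hσ y)
    rw [hintm] at hlt
    exact absurd hlt (lt_irrefl m)
  -- Step B : ∃ b > 0, μ b < m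
  have hB : ∃ b, 0 < b ∧ μ b < m := by
    by_contra hcon
    push_neg at hcon
    have hlt : ∫ y : ℝ, m * gauss σ y < ∫ y : ℝ, μ y * gauss σ y := by
      refine integral_lt_of_ae_le_of_lt_on hint2 hint1 ?_ (S := Set.Ioo 0 1) ?_ ?_
      · refine ae_ne_zero_common.mono fun y hy => ?_
        have hy0 : y ≠ 0 := by simpa using hy
        have : m ≤ μ y := by
          rw [hev y hy0]; exact hcon |y| (abs_pos.2 hy0)
        exact mul_le_mul_of_nonneg_right this (gauss_pos hσ y).le
      · rw [Real.volume_Ioo]; norm_num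
      · intro y hy
        have : m < μ y :=
          lt_of_le_of_lt (hcon 1 one_pos)
            (hanti (Set.mem_Ioi.2 hy.1) (Set.mem_Ioi.2 one_pos) hy.2)
        exact mul_lt_mul_of_pos_right this (gauss_pos hσ y)
    rw [hintm] at hlt
    exact absurd hlt (lt_irrefl m)
  obtain ⟨a, ha0, ham⟩ := hA
  obtain ⟨b, hb0, hbm⟩ := hB
  set S := {y : ℝ | 0 < y ∧ m < μ y} with hS_def
  have hne : a ∈ S := ⟨ha0, ham⟩
  have hbdd : BddAbove S := by
    refine ⟨b, fun y hy => ?_⟩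
    by_contra hyb
    push_neg at hyb
    exact absurd (lt_trans hbm hy.2)
      (not_lt.2 (hanti (Set.mem_Ioi.2 hb0) (Set.mem_Ioi.2 hy.1) hyb).le)
  refine ⟨sSup S, lt_of_lt_of_le ha0 (le_csSup hbdd hne), ?_, ?_⟩
  · intro y hy0 hyT
    obtain ⟨z, hzS, hyz⟩ := exists_lt_of_lt_csSup ⟨a, hne⟩ hyT
    exact lt_trans hzS.2 (hanti (Set.mem_Ioi.2 hy0) (Set.mem_Ioi.2 hzS.1) hyz)
  · intro y hyT
    have hT0 : 0 < sSup S := lt_of_lt_of_le ha0 (le_csSup hbdd hne)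
    set z := (sSup S + y) / 2 with hz_def
    have hz1 : sSup S < z := by rw [hz_def]; linarith
    have hz2 : z < y := by rw [hz_def]; linarith
    have hz0 : 0 < z := lt_trans hT0 hz1
    have hzS : z ∉ S := fun h => absurd (le_csSup hbdd h) (not_le.2 hz1)
    have hzm : μ z ≤ m := by
      by_contra h
      exact hzS ⟨hz0, not_le.1 h⟩
    exact lt_of_lt_of_le (hanti (Set.mem_Ioi.2 hz0) (Set.mem_Ioi.2 (lt_trans hz0 hz2)) hz2) hzm


set_option maxHeartbeats 2000000 in
/-- If `μ` is even and strictly decreasing on `(0, ∞)` (flat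
case), then for every `η ≥ 0`, `MIS` is differentiable at `η` with
`MIS′(η) < 0`: increasing the weight on highlighting strictly decreases
misinformation. -/
theorem MIS_deriv_neg_flat (σ : ℝ) (hσ : 0 < σ)
    (μ : ℝ → ℝ) (hμmeas : Measurable μ) (hμ : ∀ y, μ y ∈ Set.Icc (0:ℝ) 1)
    (M : ℝ) (hM : 2 ≤ M) (β ζ₀ ζ₁ : ℝ) (hβ : 1 < β) (hζ₁ : 0 < ζ₁)
    (heven : ∀ y, μ (-y) = μ y)
    (hanti : StrictAntiOn μ (Set.Ioi (0:ℝ))) :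
    ∀ η : ℝ, 0 ≤ η →
      DifferentiableAt ℝ (MIS σ μ M β ζ₀ ζ₁) η ∧
        deriv (MIS σ μ M β ζ₀ ζ₁) η < 0 := by
  intro η hη
  have hm := mubar_mem hσ hμmeas hμ
  obtain ⟨T, hT0, hT1, hT2⟩ := exists_threshold hσ hμmeas hμ heven hanti
  have hM0 : (0:ℝ) < M := by linarith
  have hM1 : (1:ℝ) < M := by linarith
  have hlogβ : 0 < Real.log β := Real.log_pos hβ
  have hden : 0 < M + Real.log β * M * (M - 1) / 2 := by
    have h : 0 < Real.log β * M * (M - 1) :=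
      mul_pos (mul_pos hlogβ hM0) (by linarith)
    linarith
  have hs : 0 < slopeLam M β ζ₁ := div_pos (mul_pos hζ₁ hlogβ) hden
  have hLam : ∀ z, Lam M β ζ₀ ζ₁ z = Lam M β ζ₀ ζ₁ 0 + slopeLam M β ζ₁ * z := by
    intro z; simp only [Lam, slopeLam]; field_simp; ring
  have habs1 : ∀ y, |μ y - mubar σ μ| ≤ 1 := fun y =>
    abs_le.2 ⟨by have := (hμ y).1; have := hm.2; linarith,
      by have := (hμ y).2; have := hm.1; linarith⟩
  -- D facts
  have hDK : ∀ t y, Dfun σ μ M t y = M + t * ((M - 1) * mubar σ μ + μ y) := by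
    intro t y; simp only [Dfun]; ring
  have hK0 : ∀ y, 0 ≤ (M - 1) * mubar σ μ + μ y := fun y =>
    add_nonneg (mul_nonneg (by linarith) hm.1) (hμ y).1
  have hKM : ∀ y, (M - 1) * mubar σ μ + μ y ≤ M := fun y => by nlinarith [hm.2, (hμ y).2]
  have hD1 : ∀ t ∈ Metric.ball η (1/2 : ℝ), ∀ y, 1 ≤ Dfun σ μ M t y := by
    intro t ht y
    rw [Metric.mem_ball, Real.dist_eq] at ht
    obtain ⟨ht1, ht2⟩ := abs_lt.1 ht
    rw [hDK]
    have hsplit : t * ((M - 1) * mubar σ μ + μ y)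
        = η * ((M - 1) * mubar σ μ + μ y) + (t - η) * ((M - 1) * mubar σ μ + μ y) := by ring
    have h1 : 0 ≤ η * ((M - 1) * mubar σ μ + μ y) := mul_nonneg hη (hK0 y)
    have h2 : (-(1/2) : ℝ) * ((M - 1) * mubar σ μ + μ y)
        ≤ (t - η) * ((M - 1) * mubar σ μ + μ y) :=
      mul_le_mul_of_nonneg_right (by linarith) (hK0 y)
    nlinarith [hK0 y, hKM y]
  -- measurability
  have hDmeas : ∀ t : ℝ, Measurable (fun y => Dfun σ μ M t y) := by
    intro t; simp only [Dfun]; fun_prop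
  have hpopmeas : ∀ t : ℝ, Measurable (fun y => popEx σ μ M t y) := by
    intro t; simp only [popEx, Dfun]; fun_prop
  have hLammeas : ∀ t : ℝ, Measurable (fun y => Lam M β ζ₀ ζ₁ (popEx σ μ M t y)) := by
    intro t; simp only [Lam, popEx, Dfun]; fun_prop
  have hF_meas : ∀ᶠ t in nhds η, AEStronglyMeasurable
      (fun y : ℝ => |y| * Lam M β ζ₀ ζ₁ (popEx σ μ M t y) * gauss σ y) volume :=
    Filter.Eventually.of_forall fun t =>
      ((measurable_id.abs.mul (hLammeas t)).mul (gauss_meas σ)).aestronglyMeasurable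
  have hF'_meas : AEStronglyMeasurable
      (fun y : ℝ => |y| * (slopeLam M β ζ₁ *
        ((M - 1) * (μ y - mubar σ μ) / (Dfun σ μ M η y) ^ 2)) * gauss σ y) volume := by
    refine Measurable.aestronglyMeasurable ?_
    exact (measurable_id.abs.mul ((((hμmeas.sub_const _).const_mul (M - 1)).div
      ((hDmeas η).pow_const 2)).const_mul (slopeLam M β ζ₁))).mul (gauss_meas σ)
  -- integrability of F η
  have hball : η ∈ Metric.ball η (1/2 : ℝ) := Metric.mem_ball_self (by norm_num)
  have hC : ∀ y : ℝ, |Lam M β ζ₀ ζ₁ (popEx σ μ M η y)|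
      ≤ |Lam M β ζ₀ ζ₁ 0| + slopeLam M β ζ₁ * (1 + η) := by
    intro y
    have hD := hD1 η hball y
    have hnum0 : 0 ≤ 1 + η * μ y := by nlinarith [(hμ y).1]
    have hnum1 : 1 + η * μ y ≤ 1 + η := by nlinarith [(hμ y).2]
    have hπ0 : 0 ≤ popEx σ μ M η y := div_nonneg hnum0 (by linarith)
    have hπ1 : popEx σ μ M η y ≤ 1 + η := by
      refine le_trans (div_le_self hnum0 hD) hnum1
    rw [hLam]
    refine le_trans (abs_add_le _ _) (add_le_add_right ?_ _)
    rw [abs_mul, abs_of_pos hs, abs_of_nonneg hπ0]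
    exact mul_le_mul_of_nonneg_left hπ1 hs.le
  have hF_int : Integrable
      (fun y : ℝ => |y| * Lam M β ζ₀ ζ₁ (popEx σ μ M η y) * gauss σ y) := by
    refine ((integrable_abs_mul_gauss hσ).const_mul
        (|Lam M β ζ₀ ζ₁ 0| + slopeLam M β ζ₁ * (1 + η))).mono'
      (((measurable_id.abs.mul (hLammeas η)).mul (gauss_meas σ)).aestronglyMeasurable) ?_
    refine Filter.Eventually.of_forall fun y => ?_
    rw [Real.norm_eq_abs, abs_mul, abs_mul, abs_abs, abs_of_pos (gauss_pos hσ y)]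
    calc |y| * |Lam M β ζ₀ ζ₁ (popEx σ μ M η y)| * gauss σ y
        ≤ |y| * (|Lam M β ζ₀ ζ₁ 0| + slopeLam M β ζ₁ * (1 + η)) * gauss σ y := by
          refine mul_le_mul_of_nonneg_right
            (mul_le_mul_of_nonneg_left (hC y) (abs_nonneg y)) (gauss_pos hσ y).le
      _ = (|Lam M β ζ₀ ζ₁ 0| + slopeLam M β ζ₁ * (1 + η)) * (|y| * gauss σ y) := by ring
  -- bound on F'
  have h_bound : ∀ᵐ y : ℝ ∂volume, ∀ t ∈ Metric.ball η (1/2 : ℝ),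
      ‖|y| * (slopeLam M β ζ₁ *
        ((M - 1) * (μ y - mubar σ μ) / (Dfun σ μ M t y) ^ 2)) * gauss σ y‖
      ≤ slopeLam M β ζ₁ * (M - 1) * (|y| * gauss σ y) := by
    refine Filter.Eventually.of_forall fun y t ht => ?_
    have hD := hD1 t ht y
    have hD2 : (1:ℝ) ≤ (Dfun σ μ M t y) ^ 2 := by nlinarith
    have hX : |(M - 1) * (μ y - mubar σ μ) / (Dfun σ μ M t y) ^ 2| ≤ M - 1 := by
      rw [abs_div, abs_mul, abs_of_nonneg (by linarith : (0:ℝ) ≤ M - 1),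
        abs_of_nonneg (sq_nonneg (Dfun σ μ M t y))]
      calc (M - 1) * |μ y - mubar σ μ| / (Dfun σ μ M t y) ^ 2
          ≤ (M - 1) * |μ y - mubar σ μ| :=
            div_le_self (mul_nonneg (by linarith) (abs_nonneg _)) hD2
        _ ≤ (M - 1) * 1 := mul_le_mul_of_nonneg_left (habs1 y) (by linarith)
        _ = M - 1 := mul_one _
    rw [Real.norm_eq_abs, abs_mul, abs_mul, abs_abs, abs_of_pos (gauss_pos hσ y), abs_mul,
      abs_of_pos hs]
    calc |y| * (slopeLam M β ζ₁ * |(M - 1) * (μ y - mubar σ μ) / (Dfun σ μ M t y) ^ 2|)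
          * gauss σ y
        ≤ |y| * (slopeLam M β ζ₁ * (M - 1)) * gauss σ y := by
          refine mul_le_mul_of_nonneg_right (mul_le_mul_of_nonneg_left
            (mul_le_mul_of_nonneg_left hX hs.le) (abs_nonneg y)) (gauss_pos hσ y).le
      _ = slopeLam M β ζ₁ * (M - 1) * (|y| * gauss σ y) := by ring
  have bound_int : Integrable (fun y : ℝ => slopeLam M β ζ₁ * (M - 1) * (|y| * gauss σ y)) :=
    (integrable_abs_mul_gauss hσ).const_mul _
  -- differentiability pointwise
  have h_diff : ∀ᵐ y : ℝ ∂volume, ∀ t ∈ Metric.ball η (1/2 : ℝ),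
      HasDerivAt (fun t => |y| * Lam M β ζ₀ ζ₁ (popEx σ μ M t y) * gauss σ y)
        (|y| * (slopeLam M β ζ₁ *
          ((M - 1) * (μ y - mubar σ μ) / (Dfun σ μ M t y) ^ 2)) * gauss σ y) t := by
    refine Filter.Eventually.of_forall fun y t ht => ?_
    have hD := hD1 t ht y
    have hDne : Dfun σ μ M t y ≠ 0 := by linarith
    have hd : HasDerivAt (fun t => Dfun σ μ M t y) ((M - 1) * mubar σ μ + μ y) t := by
      have heq : (fun t => Dfun σ μ M t y)
          = fun t => M + t * ((M - 1) * mubar σ μ + μ y) := by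
        funext u; rw [hDK]
      rw [heq]
      exact (hasDerivAt_mul_const _).const_add M
    have hn : HasDerivAt (fun t : ℝ => 1 + t * μ y) (μ y) t :=
      (hasDerivAt_mul_const _).const_add 1
    have hπ : HasDerivAt (fun t => popEx σ μ M t y)
        ((M - 1) * (μ y - mubar σ μ) / (Dfun σ μ M t y) ^ 2) t := by
      have h0 := hn.div hd hDne
      have heq : μ y * Dfun σ μ M t y - (1 + t * μ y) * ((M - 1) * mubar σ μ + μ y)
          = (M - 1) * (μ y - mubar σ μ) := by
        rw [hDK]; ring
      rw [heq] at h0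
      exact h0
    have hL : HasDerivAt (fun t => Lam M β ζ₀ ζ₁ (popEx σ μ M t y))
        (slopeLam M β ζ₁ * ((M - 1) * (μ y - mubar σ μ) / (Dfun σ μ M t y) ^ 2)) t := by
      have heq : (fun t => Lam M β ζ₀ ζ₁ (popEx σ μ M t y))
          = fun t => Lam M β ζ₀ ζ₁ 0 + slopeLam M β ζ₁ * popEx σ μ M t y := by
        funext u; rw [hLam]
      rw [heq]
      exact (hπ.const_mul _).const_add _
    exact (hL.const_mul |y|).mul_const (gauss σ y)
  -- differentiate under the integral
  obtain ⟨hintF', hHasDeriv⟩ := hasDerivAt_integral_of_dominated_loc_of_deriv_le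
    (F := fun t y => |y| * Lam M β ζ₀ ζ₁ (popEx σ μ M t y) * gauss σ y)
    (F' := fun t y => |y| * (slopeLam M β ζ₁ *
      ((M - 1) * (μ y - mubar σ μ) / (Dfun σ μ M t y) ^ 2)) * gauss σ y)
    (Metric.ball_mem_nhds η (by norm_num : (0:ℝ) < 1/2)) hF_meas hF_int hF'_meas h_bound bound_int h_diff
  -- the sign of the derivative
  have hint1 : Integrable (fun y : ℝ => μ y * gauss σ y) :=
    integrable_mu_mul_gauss hσ hμmeas hμ
  have hint2 : Integrable (fun y : ℝ => mubar σ μ * gauss σ y) :=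
    (integrable_gauss hσ).const_mul _
  have hint0 : ∫ y : ℝ, (μ y - mubar σ μ) * gauss σ y = 0 := by
    have heq : (fun y : ℝ => (μ y - mubar σ μ) * gauss σ y)
        = fun y => μ y * gauss σ y - mubar σ μ * gauss σ y := by funext y; ring
    rw [heq, integral_sub hint1 hint2, integral_const_mul, integral_gauss hσ, mul_one]
    exact sub_eq_zero.2 rfl
  have hA0 : (1:ℝ) ≤ M * (1 + η * mubar σ μ) := by
    nlinarith [mul_nonneg hη hm.1, mul_nonneg hM0.le (mul_nonneg hη hm.1)]
  have hMm1 : (0:ℝ) < M - 1 := by linarith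
  -- integrability of ψ
  have hψint : Integrable (fun y : ℝ =>
      |y| * ((μ y - mubar σ μ) / (Dfun σ μ M η y) ^ 2) * gauss σ y) := by
    have hc : (slopeLam M β ζ₁ * (M - 1)) ≠ 0 := ne_of_gt (mul_pos hs hMm1)
    refine (hintF'.const_mul (slopeLam M β ζ₁ * (M - 1))⁻¹).congr
      (Filter.Eventually.of_forall fun y => ?_)
    calc (slopeLam M β ζ₁ * (M - 1))⁻¹ * (|y| * (slopeLam M β ζ₁ *
          ((M - 1) * (μ y - mubar σ μ) / (Dfun σ μ M η y) ^ 2)) * gauss σ y)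
        = ((slopeLam M β ζ₁ * (M - 1))⁻¹ * (slopeLam M β ζ₁ * (M - 1))) *
          (|y| * ((μ y - mubar σ μ) / (Dfun σ μ M η y) ^ 2) * gauss σ y) := by ring
      _ = |y| * ((μ y - mubar σ μ) / (Dfun σ μ M η y) ^ 2) * gauss σ y := by
          rw [inv_mul_cancel₀ hc, one_mul]
  have hχint : Integrable (fun y : ℝ =>
      (T / (M * (1 + η * mubar σ μ)) ^ 2) * ((μ y - mubar σ μ) * gauss σ y)) := by
    refine Integrable.const_mul ?_ _
    refine (hint1.sub hint2).congr (Filter.Eventually.of_forall fun y => ?_)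
    simp only [Pi.sub_apply]
    ring
  -- core pointwise inequality
  have hcore : ∀ y : ℝ, y ≠ 0 → |y| ≠ T →
      |y| * ((μ y - mubar σ μ) / (Dfun σ μ M η y) ^ 2)
        ≤ T * ((μ y - mubar σ μ) / (M * (1 + η * mubar σ μ)) ^ 2) := by
    intro y hy0 hyT
    have hD := hD1 η hball y
    have hDpos : (0:ℝ) < Dfun σ μ M η y := by linarith
    have hDA : Dfun σ μ M η y = M * (1 + η * mubar σ μ) + η * (μ y - mubar σ μ) := rfl
    have hev : μ |y| = μ y := by
      rcases abs_cases y with ⟨h1, _⟩ | ⟨h1, _⟩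
      · rw [h1]
      · rw [h1, heven]
    have hApos : (0:ℝ) < M * (1 + η * mubar σ μ) := by linarith
    rcases le_or_gt (mubar σ μ) (μ y) with hge | hlt
    · have h0 : 0 ≤ μ y - mubar σ μ := sub_nonneg.2 hge
      have hyleT : |y| ≤ T := by
        by_contra hc
        push_neg at hc
        have := hT2 |y| hc
        rw [hev] at this
        linarith
      have hDge : M * (1 + η * mubar σ μ) ≤ Dfun σ μ M η y := by
        rw [hDA]; nlinarith [mul_nonneg hη h0]
      have h1 : (μ y - mubar σ μ) / (Dfun σ μ M η y) ^ 2
          ≤ (μ y - mubar σ μ) / (M * (1 + η * mubar σ μ)) ^ 2 := by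
        rw [div_eq_mul_inv, div_eq_mul_inv]
        refine mul_le_mul_of_nonneg_left (inv_anti₀ (by positivity) ?_) h0
        nlinarith
      calc |y| * ((μ y - mubar σ μ) / (Dfun σ μ M η y) ^ 2)
          ≤ T * ((μ y - mubar σ μ) / (Dfun σ μ M η y) ^ 2) :=
            mul_le_mul_of_nonneg_right hyleT (div_nonneg h0 (sq_nonneg _))
        _ ≤ T * ((μ y - mubar σ μ) / (M * (1 + η * mubar σ μ)) ^ 2) :=
            mul_le_mul_of_nonneg_left h1 hT0.le
    · have h0 : μ y - mubar σ μ < 0 := sub_neg.2 hlt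
      have hTley : T ≤ |y| := by
        by_contra hc
        push_neg at hc
        have := hT1 |y| (abs_pos.2 hy0) hc
        rw [hev] at this
        linarith
      have hDle : Dfun σ μ M η y ≤ M * (1 + η * mubar σ μ) := by
        rw [hDA]; nlinarith [mul_nonpos_of_nonneg_of_nonpos hη h0.le]
      have h1 : (μ y - mubar σ μ) / (Dfun σ μ M η y) ^ 2
          ≤ (μ y - mubar σ μ) / (M * (1 + η * mubar σ μ)) ^ 2 := by
        rw [div_eq_mul_inv, div_eq_mul_inv]
        refine mul_le_mul_of_nonpos_left (inv_anti₀ (by positivity) ?_) h0.le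
        nlinarith
      calc |y| * ((μ y - mubar σ μ) / (Dfun σ μ M η y) ^ 2)
          ≤ T * ((μ y - mubar σ μ) / (Dfun σ μ M η y) ^ 2) :=
            mul_le_mul_of_nonpos_right hTley
              (div_nonpos_of_nonpos_of_nonneg h0.le (sq_nonneg _))
        _ ≤ T * ((μ y - mubar σ μ) / (M * (1 + η * mubar σ μ)) ^ 2) :=
            mul_le_mul_of_nonneg_left h1 hT0.le
  -- a.e. inequality
  have hle : ∀ᵐ y : ℝ,
      |y| * ((μ y - mubar σ μ) / (Dfun σ μ M η y) ^ 2) * gauss σ y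
        ≤ (T / (M * (1 + η * mubar σ μ)) ^ 2) * ((μ y - mubar σ μ) * gauss σ y) := by
    have hnull : ∀ᵐ y : ℝ, y ∉ ({0, T, -T} : Set ℝ) :=
      (Set.toFinite _).countable.ae_notMem volume
    refine hnull.mono fun y hy => ?_
    simp only [Set.mem_insert_iff, Set.mem_singleton_iff, not_or] at hy
    obtain ⟨hy0, hyT, hyT'⟩ := hy
    have habsT : |y| ≠ T := by
      intro h
      rcases abs_cases y with ⟨h1, _⟩ | ⟨h1, _⟩
      · exact hyT (by rw [← h1, h])
      · exact hyT' (by rw [h1] at h; linarith)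
    have := mul_le_mul_of_nonneg_right (hcore y hy0 habsT) (gauss_pos hσ y).le
    calc |y| * ((μ y - mubar σ μ) / (Dfun σ μ M η y) ^ 2) * gauss σ y
        ≤ T * ((μ y - mubar σ μ) / (M * (1 + η * mubar σ μ)) ^ 2) * gauss σ y := this
      _ = (T / (M * (1 + η * mubar σ μ)) ^ 2) * ((μ y - mubar σ μ) * gauss σ y) := by ring
  -- strict inequality on (T, ∞)
  have hstrict : ∀ y ∈ Set.Ioi T,
      |y| * ((μ y - mubar σ μ) / (Dfun σ μ M η y) ^ 2) * gauss σ y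
        < (T / (M * (1 + η * mubar σ μ)) ^ 2) * ((μ y - mubar σ μ) * gauss σ y) := by
    intro y hy
    have hyT : T < y := hy
    have hy0 : 0 < y := lt_trans hT0 hyT
    have h0 : μ y - mubar σ μ < 0 := sub_neg.2 (hT2 y hyT)
    have hD := hD1 η hball y
    have hDpos : (0:ℝ) < Dfun σ μ M η y := by linarith
    have hApos : (0:ℝ) < M * (1 + η * mubar σ μ) := by linarith
    have hcdiv : (μ y - mubar σ μ) / (Dfun σ μ M η y) ^ 2 < 0 :=
      div_neg_of_neg_of_pos h0 (by positivity)
    have hDle : Dfun σ μ M η y ≤ M * (1 + η * mubar σ μ) := by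
      have hDA : Dfun σ μ M η y = M * (1 + η * mubar σ μ) + η * (μ y - mubar σ μ) := rfl
      rw [hDA]; nlinarith [mul_nonpos_of_nonneg_of_nonpos hη h0.le]
    have h1 : (μ y - mubar σ μ) / (Dfun σ μ M η y) ^ 2
        ≤ (μ y - mubar σ μ) / (M * (1 + η * mubar σ μ)) ^ 2 := by
      rw [div_eq_mul_inv, div_eq_mul_inv]
      refine mul_le_mul_of_nonpos_left (inv_anti₀ (by positivity) ?_) h0.le
      nlinarith
    have step1 : |y| * ((μ y - mubar σ μ) / (Dfun σ μ M η y) ^ 2)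
        < T * ((μ y - mubar σ μ) / (Dfun σ μ M η y) ^ 2) := by
      rw [abs_of_pos hy0]
      exact mul_lt_mul_of_neg_right hyT hcdiv
    have step2 : T * ((μ y - mubar σ μ) / (Dfun σ μ M η y) ^ 2)
        ≤ T * ((μ y - mubar σ μ) / (M * (1 + η * mubar σ μ)) ^ 2) :=
      mul_le_mul_of_nonneg_left h1 hT0.le
    calc |y| * ((μ y - mubar σ μ) / (Dfun σ μ M η y) ^ 2) * gauss σ y
        < T * ((μ y - mubar σ μ) / (M * (1 + η * mubar σ μ)) ^ 2) * gauss σ y :=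
          mul_lt_mul_of_pos_right (lt_of_lt_of_le step1 step2) (gauss_pos hσ y)
      _ = (T / (M * (1 + η * mubar σ μ)) ^ 2) * ((μ y - mubar σ μ) * gauss σ y) := by ring
  -- conclude ∫ ψ < 0
  have hψneg : ∫ y : ℝ,
      |y| * ((μ y - mubar σ μ) / (Dfun σ μ M η y) ^ 2) * gauss σ y < 0 := by
    have h1 := integral_lt_of_ae_le_of_lt_on hψint hχint hle
      (S := Set.Ioi T) (by rw [Real.volume_Ioi]; exact ENNReal.zero_lt_top) hstrict
    have h2 : ∫ y : ℝ, (T / (M * (1 + η * mubar σ μ)) ^ 2) * ((μ y - mubar σ μ) * gauss σ y)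
        = 0 := by
      rw [integral_const_mul, hint0, mul_zero]
    rwa [h2] at h1
  have hF'neg : ∫ y : ℝ, |y| * (slopeLam M β ζ₁ *
      ((M - 1) * (μ y - mubar σ μ) / (Dfun σ μ M η y) ^ 2)) * gauss σ y < 0 := by
    have heq : (fun y : ℝ => |y| * (slopeLam M β ζ₁ *
        ((M - 1) * (μ y - mubar σ μ) / (Dfun σ μ M η y) ^ 2)) * gauss σ y)
        = fun y : ℝ => (slopeLam M β ζ₁ * (M - 1)) *
          (|y| * ((μ y - mubar σ μ) / (Dfun σ μ M η y) ^ 2) * gauss σ y) := by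
      funext y; ring
    rw [heq, integral_const_mul]
    exact mul_neg_of_pos_of_neg (mul_pos hs hMm1) hψneg
  have hMISeq : MIS σ μ M β ζ₀ ζ₁
      = fun t => ∫ y : ℝ, |y| * Lam M β ζ₀ ζ₁ (popEx σ μ M t y) * gauss σ y := rfl
  refine ⟨?_, ?_⟩
  · rw [hMISeq]; exact hHasDeriv.differentiableAt
  · rw [hMISeq, hHasDeriv.deriv]; exact hF'neg
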